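/- arXiv:1112.4832 — 6 statements merged into one kernel-verified Lean document; each statement's English description precedes it below -/
import Mathlib

section
/- The group of order-preserving group automorphisms of ℤ × ℤ with the lexicographic order is isomorphic to ℤ: every such automorphism has the form (x, y) ↦ (x, y + kx) for a unique k ∈ ℤ. -/
/-- The lexicographic order on `ℤ × ℤ`. -/
def lexLeZZ (u v : ℤ × ℤ) : Prop := u.1 < v.1 ∨ (u.1 = v.1 ∧ u.2 ≤ v.2)

/-- The shear automorphism `(x, y) ↦ (x, y + k x)`. -/
def shearZZ (k : ℤ) : (ℤ × ℤ) ≃+ (ℤ × ℤ) where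
  toFun p := (p.1, p.2 + k * p.1)
  invFun p := (p.1, p.2 - k * p.1)
  left_inv p := by simp
  right_inv p := by simp
  map_add' p q := by simp [Prod.ext_iff]; ring

lemma shearZZ_apply (k : ℤ) (p : ℤ × ℤ) : shearZZ k p = (p.1, p.2 + k * p.1) := rfl

lemma rep_aux (φ : (ℤ × ℤ) ≃+ (ℤ × ℤ)) (p : ℤ × ℤ) :
    φ p = p.1 • φ (1, 0) + p.2 • φ (0, 1) := by
  have hp : p = p.1 • ((1 : ℤ), (0 : ℤ)) + p.2 • ((0 : ℤ), (1 : ℤ)) := by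
    simp [Prod.ext_iff]
  calc φ p = φ (p.1 • ((1 : ℤ), (0 : ℤ)) + p.2 • ((0 : ℤ), (1 : ℤ))) := by rw [← hp]
    _ = p.1 • φ (1, 0) + p.2 • φ (0, 1) := by
        rw [map_add, map_zsmul, map_zsmul]

/-- The group of order-preserving group automorphisms of `ℤ × ℤ` with the lexicographic
order is isomorphic to `ℤ`: there is an additive family `k ↦ J k` of such automorphisms,
`(x, y) ↦ (x, y + kx)`, and every order-preserving automorphism equals `J k` for a
unique `k ∈ ℤ`. -/
theorem orderAut_lex_int_int_iso_int :
    ∃ J : ℤ → ((ℤ × ℤ) ≃+ (ℤ × ℤ)),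
      (∀ (k : ℤ) (p : ℤ × ℤ), J k p = (p.1, p.2 + k * p.1)) ∧
      (∀ k l : ℤ, J (k + l) = (J k).trans (J l)) ∧
      (∀ k : ℤ, ∀ u v : ℤ × ℤ, lexLeZZ u v ↔ lexLeZZ (J k u) (J k v)) ∧
      (∀ φ : (ℤ × ℤ) ≃+ (ℤ × ℤ), (∀ u v : ℤ × ℤ, lexLeZZ u v ↔ lexLeZZ (φ u) (φ v)) →
        ∃! k : ℤ, φ = J k) := by
  refine ⟨shearZZ, shearZZ_apply, ?_, ?_, ?_⟩
  · intro k l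
    ext p <;> simp [shearZZ_apply, AddEquiv.trans_apply, shearZZ] <;> ring
  · intro k u v
    simp only [shearZZ_apply, lexLeZZ]
    constructor
    · rintro (h | ⟨h1, h2⟩)
      · exact Or.inl h
      · exact Or.inr ⟨h1, by rw [h1]; omega⟩
    · rintro (h | ⟨h1, h2⟩)
      · exact Or.inl h
      · refine Or.inr ⟨h1, ?_⟩
        rw [h1] at h2; omega
  · intro φ hφ
    -- positivity transfers
    have hpos : ∀ u : ℤ × ℤ, lexLeZZ 0 u ↔ lexLeZZ 0 (φ u) := by
      intro u
      have := hφ 0 u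
      rwa [map_zero φ] at this
    set a := (φ (1, 0)).1 with ha
    set b := (φ (1, 0)).2 with hb
    set c := (φ (0, 1)).1 with hc
    set d := (φ (0, 1)).2 with hd
    have hφab : φ (1, 0) = (a, b) := rfl
    have hφcd : φ (0, 1) = (c, d) := rfl
    -- c = 0
    have hc0 : c = 0 := by
      by_contra hne
      have key : ∀ n : ℤ, lexLeZZ (n • ((0:ℤ), (1:ℤ))) (1, 0) := by
        intro n
        left
        simp
      have key2 : ∀ n : ℤ, n * c ≤ a := by
        intro n
        have := (hφ (n • ((0:ℤ), (1:ℤ))) (1, 0)).mp (key n)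
        rw [map_zsmul, hφcd, hφab] at this
        rcases this with h | ⟨h1, _⟩
        · simpa using le_of_lt h
        · simpa using le_of_eq h1
      have h1 : (c * (a.natAbs + 1)) * c ≤ a := key2 _
      have hcc : c ≤ -1 ∨ 1 ≤ c := by omega
      have hc2 : 1 ≤ c * c := by rcases hcc with h | h <;> nlinarith
      have hnn : (0:ℤ) ≤ (a.natAbs : ℤ) := by positivity
      have : (a.natAbs + 1 : ℤ) ≤ (c * (a.natAbs + 1)) * c := by nlinarith
      have : (a.natAbs + 1 : ℤ) ≤ a := le_trans this h1
      have := Int.le_natAbs (a := a)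
      omega
    -- d ≥ 1
    have hd1 : 1 ≤ d := by
      have h01 : lexLeZZ 0 ((0:ℤ), (1:ℤ)) := by right; simp
      have := (hpos (0, 1)).mp h01
      rw [hφcd] at this
      simp only [lexLeZZ, Prod.fst_zero, Prod.snd_zero] at this
      have hdnn : 0 ≤ d := by omega
      have hne : φ (0, 1) ≠ 0 := by
        intro h
        have := φ.injective (by rw [h, map_zero] : φ (0,1) = φ 0)
        simp [Prod.ext_iff] at this
      rw [hφcd] at hne
      have : d ≠ 0 := by
        intro h
        exact hne (by simp [Prod.ext_iff, hc0, h])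
      omega
    -- a = 1
    have ha1 : a = 1 := by
      obtain ⟨q, hq⟩ := φ.surjective ((1 : ℤ), (0 : ℤ))
      have hrep := rep_aux φ q
      rw [hq, hφab, hφcd, hc0] at hrep
      have h1 : q.1 * a = 1 := by
        have := congrArg Prod.fst hrep
        simpa using this.symm
      have hau : a = 1 ∨ a = -1 :=
        Int.isUnit_iff.mp (IsUnit.of_mul_eq_one (a := a) q.1 (by rw [mul_comm]; exact h1))
      have hpos10 : lexLeZZ 0 ((1:ℤ), (0:ℤ)) := by left; simp
      have := (hpos (1, 0)).mp hpos10
      rw [hφab] at this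
      simp only [lexLeZZ, Prod.fst_zero, Prod.snd_zero] at this
      rcases hau with h | h
      · exact h
      · omega
    -- d = 1
    have hdd1 : d = 1 := by
      obtain ⟨q, hq⟩ := φ.surjective ((0 : ℤ), (1 : ℤ))
      have hrep := rep_aux φ q
      rw [hq, hφab, hφcd, hc0, ha1] at hrep
      have h1 : q.1 = 0 := by
        have := congrArg Prod.fst hrep
        simpa using this.symm
      have h2 : q.2 * d = 1 := by
        have := congrArg Prod.snd hrep
        simp [h1] at this
        omega
      rcases Int.isUnit_iff.mp (IsUnit.of_mul_eq_one (a := d) q.2 (by linarith [h2])) with h | h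
      · exact h
      · omega
    refine ⟨b, ?_, ?_⟩
    · ext p
      · rw [rep_aux φ p, hφab, hφcd, hc0, ha1, hdd1, shearZZ_apply]
        simp
      · rw [rep_aux φ p, hφab, hφcd, hc0, ha1, hdd1, shearZZ_apply]
        simp
        ring
    · intro y hy
      have := congrArg (fun ψ : (ℤ × ℤ) ≃+ (ℤ × ℤ) => (ψ (1, 0)).2) hy
      simp [shearZZ_apply, hb] at this
      omega
end

section
/- Let Λ₁, Λ₂ be ordered abelian groups and give Λ = Λ₁ × Λ₂ the lexicographic order. Then the group of order-preserving automorphisms of Λ that stabilize the convex subgroup {0} × Λ₂ is isomorphic to the semidirect product (Aut⁺(Λ₁) × Aut⁺(Λ₂)) ⋉ Hom(Λ₁, Λ₂), where (α₁, α₂) acts on h ∈ Hom(Λ₁, Λ₂) by (α₁, α₂)·h = α₂ ∘ h ∘ α₁⁻¹. -/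
section

variable {Λ₁ Λ₂ : Type*} [AddCommGroup Λ₁] [LinearOrder Λ₁] [IsOrderedAddMonoid Λ₁]
  [AddCommGroup Λ₂] [LinearOrder Λ₂] [IsOrderedAddMonoid Λ₂]

/-- The lexicographic order on `Λ₁ × Λ₂`. -/
def lexLeProd (u v : Λ₁ × Λ₂) : Prop := u.1 < v.1 ∨ (u.1 = v.1 ∧ u.2 ≤ v.2)

/-- An automorphism of `Λ₁ × Λ₂` preserves the lexicographic order and stabilizes the
convex subgroup `{0} × Λ₂`. -/
def IsLexAutStab (φ : (Λ₁ × Λ₂) ≃+ (Λ₁ × Λ₂)) : Prop :=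
  (∀ u v : Λ₁ × Λ₂, lexLeProd u v ↔ lexLeProd (φ u) (φ v)) ∧
  (∀ v : Λ₁ × Λ₂, v.1 = 0 ↔ (φ v).1 = 0)

lemma isLexAutStab_of_form (φ : (Λ₁ × Λ₂) ≃+ (Λ₁ × Λ₂))
    (a₁ : Λ₁ ≃+ Λ₁) (a₂ : Λ₂ ≃+ Λ₂) (h : Λ₁ →+ Λ₂)
    (ha₁ : ∀ x y : Λ₁, x ≤ y ↔ a₁ x ≤ a₁ y) (ha₂ : ∀ x y : Λ₂, x ≤ y ↔ a₂ x ≤ a₂ y)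
    (hf : ∀ v : Λ₁ × Λ₂, φ v = (a₁ v.1, a₂ v.2 + h v.1)) : IsLexAutStab φ := by
  have ha₁lt : ∀ x y : Λ₁, x < y ↔ a₁ x < a₁ y := by
    intro x y
    constructor
    · intro hlt
      exact lt_of_le_of_ne ((ha₁ _ _).1 hlt.le) (fun e => hlt.ne (a₁.injective e))
    · intro hlt
      exact lt_of_le_of_ne ((ha₁ _ _).2 hlt.le) (fun e => hlt.ne (by rw [e]))
  constructor
  · intro u v
    rw [hf u, hf v]
    unfold lexLeProd
    simp only
    constructor
    · rintro (hlt | ⟨he, hle⟩)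
      · exact Or.inl ((ha₁lt _ _).1 hlt)
      · exact Or.inr ⟨by rw [he], by rw [he]; exact add_le_add_left ((ha₂ _ _).1 hle) _⟩
    · rintro (hlt | ⟨he, hle⟩)
      · exact Or.inl ((ha₁lt _ _).2 hlt)
      · have he' : u.1 = v.1 := a₁.injective he
        refine Or.inr ⟨he', (ha₂ _ _).2 ?_⟩
        rw [he'] at hle
        exact le_of_add_le_add_right hle
  · intro v
    rw [hf v]
    simp only
    constructor
    · intro e; rw [e]; exact map_zero a₁
    · intro e; exact a₁.injective (by rw [e, map_zero])

/-- The group of order-preserving automorphisms of `Λ₁ × Λ₂` (lexicographic order)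
stabilizing `{0} × Λ₂` is isomorphic to `(Aut⁺(Λ₁) × Aut⁺(Λ₂)) ⋉ Hom(Λ₁, Λ₂)`:
every such automorphism is of the form `(x, y) ↦ (α₁ x, α₂ y + h x)` for a unique triple
`(α₁, α₂, h)` with `α₁, α₂` order-preserving automorphisms and `h` a homomorphism; every
such triple arises; and composition corresponds to the semidirect-product multiplication
`((α₁, α₂), h) · ((β₁, β₂), k) = ((α₁β₁, α₂β₂), h ∘ β₁ + α₂ ∘ k)`
(the `(α₁, α₂)`-action on homomorphisms being `h ↦ α₂ ∘ h ∘ α₁⁻¹`). -/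
theorem lexAutStab_iso_semidirect :
    (∀ φ : (Λ₁ × Λ₂) ≃+ (Λ₁ × Λ₂), IsLexAutStab φ →
      ∃! t : (Λ₁ ≃+ Λ₁) × (Λ₂ ≃+ Λ₂) × (Λ₁ →+ Λ₂),
        (∀ x y : Λ₁, x ≤ y ↔ t.1 x ≤ t.1 y) ∧ (∀ x y : Λ₂, x ≤ y ↔ t.2.1 x ≤ t.2.1 y) ∧
        (∀ v : Λ₁ × Λ₂, φ v = (t.1 v.1, t.2.1 v.2 + t.2.2 v.1))) ∧
    (∀ (a₁ : Λ₁ ≃+ Λ₁) (a₂ : Λ₂ ≃+ Λ₂) (h : Λ₁ →+ Λ₂),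
      (∀ x y : Λ₁, x ≤ y ↔ a₁ x ≤ a₁ y) → (∀ x y : Λ₂, x ≤ y ↔ a₂ x ≤ a₂ y) →
      ∃ φ : (Λ₁ × Λ₂) ≃+ (Λ₁ × Λ₂), IsLexAutStab φ ∧
        ∀ v : Λ₁ × Λ₂, φ v = (a₁ v.1, a₂ v.2 + h v.1)) ∧
    (∀ (φ ψ : (Λ₁ × Λ₂) ≃+ (Λ₁ × Λ₂)), IsLexAutStab φ → IsLexAutStab ψ →
      ∀ (a₁ : Λ₁ ≃+ Λ₁) (a₂ : Λ₂ ≃+ Λ₂) (h : Λ₁ →+ Λ₂)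
        (b₁ : Λ₁ ≃+ Λ₁) (b₂ : Λ₂ ≃+ Λ₂) (k : Λ₁ →+ Λ₂),
        (∀ v : Λ₁ × Λ₂, φ v = (a₁ v.1, a₂ v.2 + h v.1)) →
        (∀ v : Λ₁ × Λ₂, ψ v = (b₁ v.1, b₂ v.2 + k v.1)) →
        IsLexAutStab (ψ.trans φ) ∧
        ∀ v : Λ₁ × Λ₂, (ψ.trans φ) v =
          ((b₁.trans a₁) v.1, (b₂.trans a₂) v.2 +
            (h.comp b₁.toAddMonoidHom + a₂.toAddMonoidHom.comp k) v.1)) := by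
  refine ⟨?_, ?_, ?_⟩
  · -- existence and uniqueness of the triple
    intro φ hφ
    obtain ⟨hord, hstab⟩ := hφ
    have h0 : ∀ y : Λ₂, (φ (0, y)).1 = 0 := fun y => (hstab (0, y)).1 rfl
    have h0' : ∀ y : Λ₂, (φ.symm (0, y)).1 = 0 := fun y =>
      (hstab (φ.symm (0, y))).2 (by simp)
    have split : ∀ v : Λ₁ × Λ₂, v = (v.1, 0) + (0, v.2) := by
      intro v; ext <;> simp
    have fst : ∀ (a : Λ₁) (b : Λ₂), (φ (a, b)).1 = (φ (a, 0)).1 := by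
      intro a b
      have e : ((a, b) : Λ₁ × Λ₂) = (a, 0) + (0, b) := split (a, b)
      rw [e, map_add, Prod.fst_add, h0 b, add_zero]
    have sfst : ∀ (a : Λ₁) (b : Λ₂), (φ.symm (a, b)).1 = (φ.symm (a, 0)).1 := by
      intro a b
      have e : ((a, b) : Λ₁ × Λ₂) = (a, 0) + (0, b) := split (a, b)
      rw [e, map_add, Prod.fst_add, h0' b, add_zero]
    set a₁ : Λ₁ ≃+ Λ₁ :=
      { toFun := fun x => (φ (x, 0)).1
        invFun := fun x => (φ.symm (x, 0)).1
        left_inv := by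
          intro x
          show (φ.symm ((φ (x, 0)).1, 0)).1 = x
          rw [← sfst _ (φ (x, 0)).2]
          simp
        right_inv := by
          intro x
          show (φ ((φ.symm (x, 0)).1, 0)).1 = x
          rw [← fst _ (φ.symm (x, 0)).2]
          simp
        map_add' := by
          intro x y
          show (φ (x + y, 0)).1 = (φ (x, 0)).1 + (φ (y, 0)).1
          have e : ((x + y, 0) : Λ₁ × Λ₂) = (x, 0) + (y, 0) := by simp
          rw [e, map_add, Prod.fst_add] } with ha₁def
    set a₂ : Λ₂ ≃+ Λ₂ :=
      { toFun := fun y => (φ (0, y)).2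
        invFun := fun y => (φ.symm (0, y)).2
        left_inv := by
          intro y
          show (φ.symm (0, (φ (0, y)).2)).2 = y
          have e : ((0, (φ (0, y)).2) : Λ₁ × Λ₂) = φ (0, y) := Prod.ext (h0 y).symm rfl
          rw [e]; simp
        right_inv := by
          intro y
          show (φ (0, (φ.symm (0, y)).2)).2 = y
          have e : ((0, (φ.symm (0, y)).2) : Λ₁ × Λ₂) = φ.symm (0, y) :=
            Prod.ext (h0' y).symm rfl
          rw [e]; simp
        map_add' := by
          intro x y
          show (φ (0, x + y)).2 = (φ (0, x)).2 + (φ (0, y)).2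
          have e : ((0, x + y) : Λ₁ × Λ₂) = (0, x) + (0, y) := by simp
          rw [e, map_add, Prod.snd_add] } with ha₂def
    set h : Λ₁ →+ Λ₂ :=
      { toFun := fun x => (φ (x, 0)).2
        map_zero' := by
          show (φ (0, 0)).2 = 0
          have : ((0, 0) : Λ₁ × Λ₂) = 0 := rfl
          rw [this, map_zero]
          rfl
        map_add' := by
          intro x y
          show (φ (x + y, 0)).2 = (φ (x, 0)).2 + (φ (y, 0)).2
          have e : ((x + y, 0) : Λ₁ × Λ₂) = (x, 0) + (y, 0) := by simp
          rw [e, map_add, Prod.snd_add] } with hhdef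
    have hform : ∀ v : Λ₁ × Λ₂, φ v = (a₁ v.1, a₂ v.2 + h v.1) := by
      intro v
      have e : φ v = φ (v.1, 0) + φ (0, v.2) := by rw [← map_add, ← split]
      rw [e]
      refine Prod.ext ?_ ?_
      · show (φ (v.1, 0)).1 + (φ (0, v.2)).1 = a₁ v.1
        rw [h0 v.2, add_zero]; rfl
      · show (φ (v.1, 0)).2 + (φ (0, v.2)).2 = a₂ v.2 + h v.1
        rw [add_comm]; rfl
    have hmono₁ : ∀ x y : Λ₁, x ≤ y ↔ a₁ x ≤ a₁ y := by
      intro x y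
      have key := hord (x, 0) (y, 0)
      rw [hform (x, 0), hform (y, 0)] at key
      unfold lexLeProd at key
      simp only [map_zero, zero_add] at key
      constructor
      · intro hxy
        rcases lt_or_eq_of_le hxy with hlt | heq
        · rcases key.1 (Or.inl hlt) with hlt' | ⟨he, _⟩
          · exact le_of_lt hlt'
          · exact le_of_eq he
        · rw [heq]
      · intro hxy
        rcases lt_or_eq_of_le hxy with hlt | heq
        · rcases key.2 (Or.inl hlt) with hlt' | ⟨he, _⟩
          · exact le_of_lt hlt'
          · exact le_of_eq he
        · exact le_of_eq (a₁.injective heq)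
    have hmono₂ : ∀ x y : Λ₂, x ≤ y ↔ a₂ x ≤ a₂ y := by
      intro x y
      have key := hord (0, x) (0, y)
      rw [hform (0, x), hform (0, y)] at key
      unfold lexLeProd at key
      simp only [map_zero, add_zero, lt_self_iff_false, false_or, true_and] at key
      exact key
    refine ⟨(a₁, a₂, h), ⟨hmono₁, hmono₂, hform⟩, ?_⟩
    rintro ⟨b₁, b₂, k⟩ ⟨_, _, hform'⟩
    have e₁ : b₁ = a₁ := by
      ext x
      have h1 : (φ (x, 0)).1 = b₁ x := by rw [hform' (x, 0)]
      have h2 : (φ (x, 0)).1 = a₁ x := by rw [hform (x, 0)]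
      exact h1.symm.trans h2
    have e₂ : b₂ = a₂ := by
      ext y
      have h1 : (φ (0, y)).2 = b₂ y := by
        have := congrArg Prod.snd (hform' (0, y)); simpa using this
      have h2 : (φ (0, y)).2 = a₂ y := by
        have := congrArg Prod.snd (hform (0, y)); simpa using this
      exact h1.symm.trans h2
    have e₃ : k = h := by
      ext x
      have h1 : (φ (x, 0)).2 = k x := by
        have := congrArg Prod.snd (hform' (x, 0)); simpa using this
      have h2 : (φ (x, 0)).2 = h x := by
        have := congrArg Prod.snd (hform (x, 0)); simpa using this
      exact h1.symm.trans h2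
    simp [e₁, e₂, e₃]
  · -- surjectivity
    intro a₁ a₂ h ha₁ ha₂
    refine ⟨{ toFun := fun v => (a₁ v.1, a₂ v.2 + h v.1)
              invFun := fun v => (a₁.symm v.1, a₂.symm (v.2 - h (a₁.symm v.1)))
              left_inv := by
                intro v
                show ((a₁.symm (a₁ v.1), a₂.symm (a₂ v.2 + h v.1 - h (a₁.symm (a₁ v.1))))
                  : Λ₁ × Λ₂) = v
                simp
              right_inv := by
                intro v
                show ((a₁ (a₁.symm v.1),
                  a₂ (a₂.symm (v.2 - h (a₁.symm v.1))) + h (a₁.symm v.1)) : Λ₁ × Λ₂) = v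
                simp
              map_add' := by
                intro u v
                show ((a₁ (u + v).1, a₂ (u + v).2 + h (u + v).1) : Λ₁ × Λ₂)
                  = (a₁ u.1, a₂ u.2 + h u.1) + (a₁ v.1, a₂ v.2 + h v.1)
                refine Prod.ext ?_ ?_
                · simp [map_add]
                · simp only [Prod.fst_add, Prod.snd_add, map_add, Prod.snd]
                  abel }, ?_, fun v => rfl⟩
    exact isLexAutStab_of_form _ a₁ a₂ h ha₁ ha₂ (fun v => rfl)
  · -- composition
    intro φ ψ hφ hψ a₁ a₂ h b₁ b₂ k hfφ hfψ
    obtain ⟨hordφ, hstabφ⟩ := hφ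
    obtain ⟨hordψ, hstabψ⟩ := hψ
    constructor
    · exact ⟨fun u v => (hordψ u v).trans (hordφ (ψ u) (ψ v)),
        fun v => (hstabψ v).trans (hstabφ (ψ v))⟩
    · intro v
      rw [AddEquiv.trans_apply, hfψ v, hfφ]
      refine Prod.ext ?_ ?_
      · rfl
      · show a₂ (b₂ v.2 + k v.1) + h (b₁ v.1) = ((b₂.trans a₂) v.2 +
          (h.comp b₁.toAddMonoidHom + a₂.toAddMonoidHom.comp k) v.1)
        simp only [AddEquiv.trans_apply, AddMonoidHom.add_apply, AddMonoidHom.coe_comp,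
          AddEquiv.coe_toAddMonoidHom, Function.comp_apply, map_add]
        abel

end
end

section
/- Let α : G → Aut⁺(Λ) be a homomorphism and L : G → Λ an α-affine Lyndon length function. Define δ : G × G → Λ by δ(g,h) = α_g(L(g⁻¹h)). Then δ is a G-invariant pseudometric: δ(g,g) = 0, δ(g,h) = δ(h,g), δ(g,k) ≤ δ(g,h) + δ(h,k), and δ(γg, γh) = α_γ(δ(g,h)) for all γ, g, h, k ∈ G. -/
/-- Twice the ancillary function `c` of an affine Lyndon length function:
`c2 g h = 2·c(g,h) = L(g) + L(h) − α_g L(g⁻¹h)`. -/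
def lyndonC2 {G : Type*} [Group G] {Λ : Type*} [AddCommGroup Λ] [LinearOrder Λ]
    [IsOrderedAddMonoid Λ]
    (α : G →* Multiplicative (AddAut Λ)) (L : G → Λ) (g h : G) : Λ :=
  L g + L h - Multiplicative.toAdd (α g) (L (g⁻¹ * h))

/-- If `L` is an `α`-affine Lyndon length function, then `δ(g,h) = α_g L(g⁻¹h)` is a
pseudometric on `G` which is `G`-invariant up to the dilation `α`:
`δ(g,g) = 0`, `δ(g,h) = δ(h,g)`, `δ(g,k) ≤ δ(g,h) + δ(h,k)`, and
`δ(γg, γh) = α_γ δ(g,h)`. -/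
theorem affine_lyndon_length_delta_pseudometric {G : Type*} [Group G] {Λ : Type*}
    [AddCommGroup Λ] [LinearOrder Λ] [IsOrderedAddMonoid Λ] (α : G →* Multiplicative (AddAut Λ))
    (hα : ∀ (g : G) (a b : Λ), a ≤ b ↔ Multiplicative.toAdd (α g) a ≤ Multiplicative.toAdd (α g) b) (L : G → Λ)
    (hL2 : L 1 = 0)
    (hL3 : ∀ g : G, L g = Multiplicative.toAdd (α g) (L g⁻¹))
    (hL4 : ∀ g h k : G, lyndonC2 α L g h < lyndonC2 α L g k →
      lyndonC2 α L g h = lyndonC2 α L h k)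
    (δ : G → G → Λ) (hδ : ∀ g h : G, δ g h = Multiplicative.toAdd (α g) (L (g⁻¹ * h))) :
    (∀ g : G, δ g g = 0) ∧
    (∀ g h : G, δ g h = δ h g) ∧
    (∀ g h k : G, δ g k ≤ δ g h + δ h k) ∧
    (∀ γ g h : G, δ (γ * g) (γ * h) = Multiplicative.toAdd (α γ) (δ g h)) := by
  have hcomp : ∀ (a b : G) (x : Λ), Multiplicative.toAdd (α a) (Multiplicative.toAdd (α b) x) = Multiplicative.toAdd (α (a * b)) x := by
    intro a b x; rw [map_mul]; rfl
  refine ⟨?_, ?_, ?_, ?_⟩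
  · intro g
    rw [hδ, inv_mul_cancel, hL2, map_zero]
  · intro g h
    rw [hδ, hδ, hL3 (g⁻¹ * h), mul_inv_rev, inv_inv, hcomp]
    simp
  · intro g h k
    set a := g⁻¹ * h with ha
    set b := g⁻¹ * k with hb
    -- key: c2 a b ≤ c2 a a = 2 L a
    have hc2aa : lyndonC2 α L a a = L a + L a := by
      simp [lyndonC2, hL2]
    have hkey : lyndonC2 α L a b ≤ lyndonC2 α L a a := by
      by_contra hlt
      push_neg at hlt
      have := hL4 a a b hlt
      exact absurd this (ne_of_lt hlt)
    have htri : L b ≤ L a + Multiplicative.toAdd (α a) (L (a⁻¹ * b)) := by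
      have h1 := hkey
      simp only [lyndonC2, inv_mul_cancel, hL2, map_zero, sub_zero] at h1
      have h2 : L a + (L b - Multiplicative.toAdd (α a) (L (a⁻¹ * b))) ≤ L a + L a := by
        rw [← add_sub_assoc]; exact h1
      have h3 := (add_le_add_iff_left (L a)).mp h2
      exact sub_le_iff_le_add.mp h3
    have hab : a⁻¹ * b = h⁻¹ * k := by
      rw [ha, hb, mul_inv_rev, inv_inv]; group
    rw [hδ, hδ, hδ]
    have := (hα g _ _).mp htri
    rw [map_add, hab, hcomp] at this
    simpa [ha, hb, mul_assoc] using this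
  · intro γ g h
    rw [hδ, hδ, hcomp]
    congr 1
    group
end

section
/- Define bijections σ, τ of ℤ³ by σ(x,y,z) = (x, y+1, z) and τ(x,y,z) = (x+1, y, z+y). Then the action of the group ⟨σ, τ⟩ on ℤ³ is free: the only element of ⟨σ, τ⟩ fixing some point of ℤ³ is the identity. -/
/-- The bijection `σ(x,y,z) = (x, y+1, z)` of `ℤ³`. -/
def heisSigma : Equiv.Perm (ℤ × ℤ × ℤ) where
  toFun p := (p.1, p.2.1 + 1, p.2.2)
  invFun p := (p.1, p.2.1 - 1, p.2.2)
  left_inv p := by obtain ⟨x, y, z⟩ := p; simp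
  right_inv p := by obtain ⟨x, y, z⟩ := p; simp

/-- The bijection `τ(x,y,z) = (x+1, y, z+y)` of `ℤ³`. -/
def heisTau : Equiv.Perm (ℤ × ℤ × ℤ) where
  toFun p := (p.1 + 1, p.2.1, p.2.2 + p.2.1)
  invFun p := (p.1 - 1, p.2.1, p.2.2 - p.2.1)
  left_inv p := by obtain ⟨x, y, z⟩ := p; simp
  right_inv p := by obtain ⟨x, y, z⟩ := p; simp

lemma heis_form : ∀ g ∈ Subgroup.closure ({heisSigma, heisTau} : Set (Equiv.Perm (ℤ × ℤ × ℤ))),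
    ∃ a b c : ℤ, ∀ p : ℤ × ℤ × ℤ, g p = (p.1 + a, p.2.1 + b, p.2.2 + a * p.2.1 + c) := by
  intro g hg
  induction hg using Subgroup.closure_induction with
  | mem x hx =>
    rcases hx with h | h
    · exact ⟨0, 1, 0, by subst h; intro p; simp [heisSigma]⟩
    · exact ⟨1, 0, 0, by subst h; intro p; simp [heisTau, add_comm]⟩
  | one => exact ⟨0, 0, 0, by intro p; simp⟩
  | mul x y _ _ hx hy =>
    obtain ⟨a, b, c, hx⟩ := hx
    obtain ⟨a', b', c', hy⟩ := hy
    refine ⟨a + a', b + b', c' + a * b' + c, fun p => ?_⟩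
    have : (x * y) p = x (y p) := rfl
    rw [this, hy, hx]
    refine Prod.ext (by ring) (Prod.ext (by ring) (by dsimp; ring))
  | inv x _ hx =>
    obtain ⟨a, b, c, hx⟩ := hx
    refine ⟨-a, -b, a * b - c, fun p => ?_⟩
    apply x.injective
    rw [show x (x⁻¹ p) = p from x.apply_symm_apply p, hx]
    refine Prod.ext (by dsimp; ring) (Prod.ext (by dsimp; ring) (by dsimp; ring))

/-- The action of `⟨σ, τ⟩` on `ℤ³` is free: the only element of the subgroup of
`Perm ℤ³` generated by `σ` and `τ` fixing some point is the identity. -/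
theorem heisenberg_perm_action_free :
    ∀ g ∈ Subgroup.closure ({heisSigma, heisTau} : Set (Equiv.Perm (ℤ × ℤ × ℤ))),
      (∃ p : ℤ × ℤ × ℤ, g p = p) → g = 1 := by
  intro g hg ⟨p, hp⟩
  obtain ⟨a, b, c, h⟩ := heis_form g hg
  obtain ⟨x, y, z⟩ := p
  rw [h] at hp
  simp only [Prod.mk.injEq] at hp
  obtain ⟨h1, h2, h3⟩ := hp
  have ha : a = 0 := by omega
  have hb : b = 0 := by omega
  subst ha
  have hc : c = 0 := by simp at h3; omega
  ext q
  · rw [h q]; simp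
  · rw [h q]; simp [hb]
  · rw [h q]; simp [hc]
end

section
/- Let a > 0 be a transcendental real number and define bijections σ, τ of ℤ × ℝ by σ(x,y) = (x+1, ay) and τ(x,y) = (x, y+1). Then the subgroup of permutations of ℤ × ℝ generated by σ and τ is isomorphic to the wreath product ℤ ≀ ℤ (the restricted wreath product of two infinite cyclic groups), and its action on ℤ × ℝ is free. -/
/-- The shift action of `ℤ` on `⨁_{n ∈ ℤ} ℤ` (modelled as `ℤ →₀ ℤ`), defining the
restricted wreath product `ℤ ≀ ℤ`. -/
noncomputable def wreathShift : Multiplicative ℤ →* MulAut (Multiplicative (ℤ →₀ ℤ)) :=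
  MonoidHom.mk'
    (fun k => AddEquiv.toMultiplicative (Finsupp.domCongr (Equiv.addRight k.toAdd)))
    (by
      intro a b
      have h : (Finsupp.domCongr (M := ℤ) (Equiv.addRight (Multiplicative.toAdd (a * b)))) =
          (Finsupp.domCongr (Equiv.addRight (Multiplicative.toAdd b))).trans
            (Finsupp.domCongr (Equiv.addRight (Multiplicative.toAdd a))) := by
        rw [Finsupp.domCongr_trans]
        congr 1
        ext z
        simp [toAdd_mul]
        ring
      ext x
      simp only [h]
      rfl)

/-- The restricted wreath product `ℤ ≀ ℤ = (⨁_{n∈ℤ} ℤ) ⋊ ℤ`, with `ℤ` acting by shifting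
coordinates. -/
noncomputable def WreathZZ := Multiplicative (ℤ →₀ ℤ) ⋊[wreathShift] Multiplicative ℤ

noncomputable instance : Group WreathZZ := SemidirectProduct.instGroup

namespace WreathAux

/-- `S a f = ∑ n, f n * a ^ n`. -/
noncomputable def S (a : ℝ) (f : ℤ →₀ ℤ) : ℝ := f.sum fun n c => (c : ℝ) * a ^ n

theorem S_add (a : ℝ) (f g : ℤ →₀ ℤ) : S a (f + g) = S a f + S a g := by
  unfold S
  apply Finsupp.sum_add_index' <;> intros <;> push_cast <;> ring

theorem S_zero (a : ℝ) : S a 0 = 0 := Finsupp.sum_zero_index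

theorem S_single (a : ℝ) (n c : ℤ) : S a (Finsupp.single n c) = (c : ℝ) * a ^ n := by
  unfold S
  rw [Finsupp.sum_single_index]
  simp

theorem S_shift (a : ℝ) (ha : a ≠ 0) (k : ℤ) (f : ℤ →₀ ℤ) :
    S a (Finsupp.equivMapDomain (Equiv.addRight k) f) = a ^ k * S a f := by
  unfold S
  rw [Finsupp.equivMapDomain_eq_mapDomain,
    Finsupp.sum_mapDomain_index (by intro b; simp) (by intro b c d; push_cast; ring),
    Finsupp.mul_sum]
  apply Finsupp.sum_congr
  intro n _
  simp only [Equiv.coe_addRight]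
  rw [zpow_add₀ ha]
  ring

theorem S_eq_zero (a : ℝ) (ha0 : 0 < a) (ha : Transcendental ℚ a) (f : ℤ →₀ ℤ)
    (h : S a f = 0) : f = 0 := by
  by_contra hf
  set N : ℕ := f.support.sup fun n => (-n).toNat with hN
  have hnn : ∀ n ∈ f.support, 0 ≤ n + N := by
    intro n hn
    have : (-n).toNat ≤ (N : ℤ) := by
      exact_mod_cast Finset.le_sup (f := fun n => (-n).toNat) hn
    omega
  set P : Polynomial ℚ := ∑ n ∈ f.support, Polynomial.C (f n : ℚ) * Polynomial.X ^ (n + N).toNat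
    with hP
  have ha' : a ≠ 0 := ne_of_gt ha0
  have hinj : ∀ n ∈ f.support, ∀ m ∈ f.support, (n + N).toNat = (m + N).toNat → n = m := by
    intro n hn m hm hnm
    have := hnn n hn; have := hnn m hm; omega
  have hPne : P ≠ 0 := by
    obtain ⟨n₀, hn₀⟩ := Finsupp.support_nonempty_iff.2 hf
    intro hP0
    have hc : P.coeff ((n₀ + N).toNat) = (f n₀ : ℚ) := by
      rw [hP, Polynomial.finset_sum_coeff]
      rw [Finset.sum_eq_single n₀]
      · simp
      · intro m hm hmn
        rw [Polynomial.coeff_C_mul, Polynomial.coeff_X_pow,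
          if_neg (fun h => hmn (hinj m hm n₀ hn₀ h.symm)), mul_zero]
      · intro h; exact absurd hn₀ h
    rw [hP0] at hc
    simp only [Polynomial.coeff_zero] at hc
    exact Finsupp.mem_support_iff.1 hn₀ (by exact_mod_cast hc.symm)
  have hev : Polynomial.aeval a P = 0 := by
    rw [hP]
    rw [map_sum]
    have : ∀ n ∈ f.support,
        Polynomial.aeval a (Polynomial.C (f n : ℚ) * Polynomial.X ^ (n + N).toNat)
          = (f n : ℝ) * a ^ n * a ^ (N : ℤ) := by
      intro n hn
      have h1 : ((n + N).toNat : ℤ) = n + N := Int.toNat_of_nonneg (hnn n hn)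
      simp only [map_mul, map_pow, Polynomial.aeval_C, Polynomial.aeval_X]
      rw [← zpow_natCast a ((n + N).toNat), h1, zpow_add₀ ha', map_intCast]
      ring
    rw [Finset.sum_congr rfl this, ← Finset.sum_mul]
    have : ∑ n ∈ f.support, (f n : ℝ) * a ^ n = S a f := by
      rw [S, Finsupp.sum]
    rw [this, h, zero_mul]
  exact ha ⟨P, hPne, hev⟩

variable (a : ℝ) (ha : a ≠ 0)

/-- The permutation `(x, y) ↦ (x + k, a ^ k * y + S a f)`. -/
noncomputable def E0 (f : ℤ →₀ ℤ) (k : ℤ) : Equiv.Perm (ℤ × ℝ) where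
  toFun p := (p.1 + k, a ^ k * p.2 + S a f)
  invFun p := (p.1 - k, a ^ (-k) * (p.2 - S a f))
  left_inv p := by
    ext
    · simp
    · simp only
      rw [zpow_neg]
      field_simp
      ring
  right_inv p := by
    ext
    · simp
    · simp only
      rw [zpow_neg]
      field_simp
      ring

/-- The homomorphism `WreathZZ →* Perm (ℤ × ℝ)`. -/
noncomputable def E : WreathZZ →* Equiv.Perm (ℤ × ℝ) :=
  MonoidHom.mk' (fun g => E0 a ha (g.left.toAdd) (g.right.toAdd))
    (by
      intro g₁ g₂
      ext p
      · show p.1 + ((g₁ * g₂).right).toAdd = (p.1 + g₂.right.toAdd) + g₁.right.toAdd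
        have hr : ((g₁ * g₂).right).toAdd = g₁.right.toAdd + g₂.right.toAdd := rfl
        omega
      · show a ^ (((g₁ * g₂).right).toAdd) * p.2 + S a ((g₁ * g₂).left.toAdd) =
          a ^ (g₁.right.toAdd) * (a ^ (g₂.right.toAdd) * p.2 + S a (g₂.left.toAdd))
            + S a (g₁.left.toAdd)
        have hr : ((g₁ * g₂).right).toAdd = g₁.right.toAdd + g₂.right.toAdd := rfl
        have hl : ((g₁ * g₂).left).toAdd
            = g₁.left.toAdd + Finsupp.equivMapDomain (Equiv.addRight (g₁.right.toAdd))
                (g₂.left.toAdd) := rfl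
        rw [hr, hl, S_add, S_shift a ha, zpow_add₀ ha]
        ring)

theorem E_apply (f : ℤ →₀ ℤ) (k : ℤ) (p : ℤ × ℝ) :
    E a ha ⟨Multiplicative.ofAdd f, Multiplicative.ofAdd k⟩ p
      = (p.1 + k, a ^ k * p.2 + S a f) := rfl

theorem toAdd_eq_zero_imp {f : Multiplicative (ℤ →₀ ℤ)} (h : f.toAdd = 0) : f = 1 := by
  rw [← ofAdd_toAdd f, h]; rfl

theorem E_injective (ha0 : 0 < a) (hat : Transcendental ℚ a) :
    Function.Injective (E a ha) := by
  rw [injective_iff_map_eq_one]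
  intro g hg
  have h := congrArg (fun (e : Equiv.Perm (ℤ × ℝ)) => e (0, 0)) hg
  simp only [Equiv.Perm.coe_one, id_eq] at h
  have h1 : (0 : ℤ) + g.right.toAdd = 0 := congrArg Prod.fst h
  have h2 : a ^ (g.right.toAdd) * (0:ℝ) + S a (g.left.toAdd) = 0 := congrArg Prod.snd h
  have hk : g.right.toAdd = 0 := by omega
  rw [mul_zero, zero_add] at h2
  have hf : g.left.toAdd = 0 := S_eq_zero a ha0 hat _ h2
  exact SemidirectProduct.ext (toAdd_eq_zero_imp hf) (by rw [← ofAdd_toAdd g.right, hk]; rfl)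

theorem gen_top :
    Subgroup.closure ({SemidirectProduct.inl (Multiplicative.ofAdd (Finsupp.single 0 1)),
      SemidirectProduct.inr (Multiplicative.ofAdd 1)} :
        Set WreathZZ) = ⊤ := by
  rw [eq_top_iff]
  intro g _
  set s : WreathZZ := SemidirectProduct.inl (Multiplicative.ofAdd (Finsupp.single 0 1))
  set t : WreathZZ := SemidirectProduct.inr (Multiplicative.ofAdd 1)
  have hs : s ∈ Subgroup.closure {s, t} := Subgroup.subset_closure (by simp)
  have ht : t ∈ Subgroup.closure {s, t} := Subgroup.subset_closure (by simp)
  have htk : ∀ k : ℤ, (SemidirectProduct.inr (Multiplicative.ofAdd k) : WreathZZ)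
      ∈ Subgroup.closure {s, t} := by
    intro k
    have : (SemidirectProduct.inr (Multiplicative.ofAdd k) : WreathZZ) = t ^ k := by
      rw [show t ^ k = SemidirectProduct.inr ((Multiplicative.ofAdd (1:ℤ)) ^ k) from
        (map_zpow _ _ _).symm]
      congr 1
      rw [← ofAdd_zsmul]
      norm_num
    rw [this]
    exact zpow_mem ht k
  have hsingle : ∀ (n c : ℤ),
      (SemidirectProduct.inl (Multiplicative.ofAdd (Finsupp.single n c)) : WreathZZ)
        ∈ Subgroup.closure {s, t} := by
    intro n c
    have hsc : (SemidirectProduct.inl (Multiplicative.ofAdd (Finsupp.single 0 c)) : WreathZZ)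
        = s ^ c := by
      rw [show s ^ c = SemidirectProduct.inl ((Multiplicative.ofAdd (Finsupp.single (0:ℤ) (1:ℤ))) ^ c) from
        (map_zpow _ _ _).symm]
      congr 1
      rw [← ofAdd_zsmul, Finsupp.smul_single]
      norm_num
    have hφ : wreathShift (Multiplicative.ofAdd n) (Multiplicative.ofAdd (Finsupp.single 0 c))
        = Multiplicative.ofAdd (Finsupp.single n c) := by
      show Multiplicative.ofAdd
        (Finsupp.equivMapDomain (Equiv.addRight n) (Finsupp.single 0 c)) = _
      rw [Finsupp.equivMapDomain_single]
      congr 2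
      simp
    have key := SemidirectProduct.inl_aut (φ := wreathShift) (Multiplicative.ofAdd n)
      (Multiplicative.ofAdd (Finsupp.single 0 c))
    rw [hφ] at key
    rw [key]
    refine mul_mem (mul_mem (htk n) (by rw [hsc]; exact zpow_mem hs c)) ?_
    have hneg : (Multiplicative.ofAdd n)⁻¹ = Multiplicative.ofAdd (-n) := rfl
    rw [hneg]
    exact htk (-n)
  have hinl : ∀ f : ℤ →₀ ℤ,
      (SemidirectProduct.inl (Multiplicative.ofAdd f) : WreathZZ) ∈ Subgroup.closure {s, t} := by
    intro f
    induction f using Finsupp.induction with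
    | zero =>
      have : (SemidirectProduct.inl (Multiplicative.ofAdd (0 : ℤ →₀ ℤ)) : WreathZZ) = 1 := by
        exact map_one _
      rw [this]; exact one_mem _
    | single_add n c f _ _ ih =>
      have : (SemidirectProduct.inl (Multiplicative.ofAdd (Finsupp.single n c + f)) : WreathZZ)
          = SemidirectProduct.inl (Multiplicative.ofAdd (Finsupp.single n c))
            * SemidirectProduct.inl (Multiplicative.ofAdd f) := by
        rw [← map_mul]
        rfl
      rw [this]
      exact mul_mem (hsingle n c) ih
  have : g = SemidirectProduct.inl g.left * SemidirectProduct.inr g.right :=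
    (SemidirectProduct.inl_left_mul_inr_right g).symm
  rw [this]
  exact mul_mem (hinl g.left.toAdd) (htk g.right.toAdd)

end WreathAux

/-- For transcendental `a > 0`, the subgroup of `Perm (ℤ × ℝ)` generated by
`σ(x,y) = (x+1, ay)` and `τ(x,y) = (x, y+1)` is isomorphic to the restricted wreath
product `ℤ ≀ ℤ`, and its action on `ℤ × ℝ` is free. -/
theorem wreath_product_perm_iso_and_free (a : ℝ) (ha0 : 0 < a)
    (ha : Transcendental ℚ a) (σ τ : Equiv.Perm (ℤ × ℝ))
    (hσ : ∀ p : ℤ × ℝ, σ p = (p.1 + 1, a * p.2))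
    (hτ : ∀ p : ℤ × ℝ, τ p = (p.1, p.2 + 1)) :
    Nonempty (WreathZZ ≃* (Subgroup.closure {σ, τ} : Subgroup (Equiv.Perm (ℤ × ℝ)))) ∧
    ∀ g ∈ Subgroup.closure ({σ, τ} : Set (Equiv.Perm (ℤ × ℝ))),
      (∃ p : ℤ × ℝ, g p = p) → g = 1 := by
  have ha' : a ≠ 0 := ne_of_gt ha0
  let E := WreathAux.E a ha'
  set s : WreathZZ := SemidirectProduct.inl (Multiplicative.ofAdd (Finsupp.single 0 1))
  set t : WreathZZ := SemidirectProduct.inr (Multiplicative.ofAdd 1)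
  have hEs : E s = τ := by
    apply Equiv.ext
    intro p
    rw [hτ]
    show ((p.1 + 0 : ℤ), a ^ (0:ℤ) * p.2 + WreathAux.S a (Finsupp.single 0 1)) = _
    rw [WreathAux.S_single]
    norm_num [Prod.ext_iff]
  have hEt : E t = σ := by
    apply Equiv.ext
    intro p
    rw [hσ]
    show ((p.1 + 1 : ℤ), a ^ (1:ℤ) * p.2 + WreathAux.S a 0) = _
    rw [WreathAux.S_zero]
    norm_num [Prod.ext_iff]
  have hrange : E.range = Subgroup.closure {σ, τ} := by
    rw [MonoidHom.range_eq_map, ← WreathAux.gen_top, MonoidHom.map_closure]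
    congr 1
    have := Set.image_pair (⇑E) s t
    rw [hEs, hEt, Set.pair_comm τ σ] at this
    exact this
  have hinj : Function.Injective E := WreathAux.E_injective a ha' ha0 ha
  constructor
  · exact ⟨(MonoidHom.ofInjective hinj).trans (MulEquiv.subgroupCongr hrange)⟩
  · intro g hg hfix
    rw [← hrange] at hg
    obtain ⟨w, rfl⟩ := hg
    obtain ⟨p, hp⟩ := hfix
    have hEw : E w = WreathAux.E0 a ha' (w.left.toAdd) (w.right.toAdd) := rfl
    rw [hEw] at hp
    have h1 : p.1 + w.right.toAdd = p.1 := congrArg Prod.fst hp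
    have h2 : a ^ (w.right.toAdd) * p.2 + WreathAux.S a (w.left.toAdd) = p.2 :=
      congrArg Prod.snd hp
    have hk : w.right.toAdd = 0 := by omega
    rw [hk] at h2
    simp only [zpow_zero, one_mul] at h2
    have hS : WreathAux.S a (w.left.toAdd) = 0 := by linarith
    have hf : w.left.toAdd = 0 := WreathAux.S_eq_zero a ha0 ha _ hS
    have hw : w = 1 := SemidirectProduct.ext (WreathAux.toAdd_eq_zero_imp hf)
      (by rw [← ofAdd_toAdd w.right, hk]; rfl)
    rw [hw, map_one]
end

section
/- Let a ≥ 2 be an integer and define bijections σ, τ of ℤ × ℝ by σ(x,y) = (x+1, ay) and τ(x,y) = (x, y+1). Then the subgroup of permutations of ℤ × ℝ generated by σ and τ is isomorphic to the Baumslag–Solitar group BS(1,a) = ⟨s, t | s t s⁻¹ = t^a⟩ via s ↦ σ, t ↦ τ, and the action of this group on ℤ × ℝ is free. -/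
/-- The single relation `s t s⁻¹ (t^a)⁻¹` defining the Baumslag–Solitar group
`BS(1,a) = ⟨s, t | s t s⁻¹ = t^a⟩`, with `s = of true`, `t = of false`. -/
def bsRels (a : ℤ) : Set (FreeGroup Bool) :=
  {FreeGroup.of true * FreeGroup.of false * (FreeGroup.of true)⁻¹ *
    ((FreeGroup.of false) ^ a)⁻¹}

section BS
variable {a : ℤ} (ha : 2 ≤ a) {σ τ : Equiv.Perm (ℤ × ℝ)}
  (hσ : ∀ p : ℤ × ℝ, σ p = (p.1 + 1, (a : ℝ) * p.2))
  (hτ : ∀ p : ℤ × ℝ, τ p = (p.1, p.2 + 1))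

include ha hσ in
lemma sigma_zpow (n : ℤ) : ∀ p : ℤ × ℝ, (σ ^ n) p = (p.1 + n, (a : ℝ) ^ n * p.2) := by
  have ha0 : (a : ℝ) ≠ 0 := by positivity
  have hinv : ∀ p : ℤ × ℝ, σ⁻¹ p = (p.1 - 1, (a : ℝ)⁻¹ * p.2) := by
    intro p
    apply σ.injective
    rw [Equiv.Perm.coe_inv, Equiv.apply_symm_apply, hσ]
    simp [mul_inv_cancel_left₀ ha0]
  induction n using Int.induction_on with
  | zero => simp
  | succ k ih =>
      intro p
      rw [zpow_add_one, Equiv.Perm.mul_apply, hσ, ih]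
      simp only [zpow_add_one₀ ha0]
      rw [Prod.mk.injEq]; constructor <;> ring
  | pred k ih =>
      intro p
      rw [zpow_sub_one, Equiv.Perm.mul_apply, hinv, ih]
      simp only [zpow_sub_one₀ ha0]
      rw [Prod.mk.injEq]; constructor <;> ring

include hτ in
lemma tau_zpow (q : ℤ) : ∀ p : ℤ × ℝ, (τ ^ q) p = (p.1, p.2 + q) := by
  have hinv : ∀ p : ℤ × ℝ, τ⁻¹ p = (p.1, p.2 - 1) := by
    intro p
    apply τ.injective
    rw [Equiv.Perm.coe_inv, Equiv.apply_symm_apply, hτ]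
    simp
  induction q using Int.induction_on with
  | zero => simp
  | succ k ih =>
      intro p
      rw [zpow_add_one, Equiv.Perm.mul_apply, hτ, ih]
      push_cast
      rw [Prod.mk.injEq]; constructor <;> ring
  | pred k ih =>
      intro p
      rw [zpow_sub_one, Equiv.Perm.mul_apply, hinv, ih]
      push_cast
      rw [Prod.mk.injEq]; constructor <;> ring

/-- `s` in `BS(1,a)`. -/
noncomputable def bsS (a : ℤ) : PresentedGroup (bsRels a) := PresentedGroup.of true
/-- `t` in `BS(1,a)`. -/
noncomputable def bsT (a : ℤ) : PresentedGroup (bsRels a) := PresentedGroup.of false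

lemma bs_rel (a : ℤ) : bsS a * bsT a * (bsS a)⁻¹ = (bsT a) ^ a := by
  have h : (PresentedGroup.mk (bsRels a))
      (FreeGroup.of true * FreeGroup.of false * (FreeGroup.of true)⁻¹ *
        ((FreeGroup.of false) ^ a)⁻¹) = 1 := by
    rw [show (1 : PresentedGroup (bsRels a)) = (PresentedGroup.mk (bsRels a)) 1 from rfl]
    apply (QuotientGroup.eq_one_iff _).2
    exact Subgroup.subset_normalClosure rfl
  have h2 : bsS a * bsT a * (bsS a)⁻¹ * ((bsT a) ^ a)⁻¹ = 1 := by
    simpa [bsS, bsT, PresentedGroup.of, map_mul, map_inv, map_zpow] using h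
  rw [← mul_inv_eq_one]
  exact h2

lemma bs_conj_zpow (a : ℤ) (m : ℤ) :
    bsS a * (bsT a) ^ m * (bsS a)⁻¹ = (bsT a) ^ (a * m) := by
  rw [← conj_zpow, bs_rel, ← zpow_mul]

/-- `s^k * t^q = t^(a^k q) * s^k` for natural `k`. -/
lemma bs_shift (a : ℤ) (k : ℕ) (q : ℤ) :
    (bsS a) ^ (k : ℤ) * (bsT a) ^ q = (bsT a) ^ (a ^ k * q) * (bsS a) ^ (k : ℤ) := by
  induction k generalizing q with
  | zero => simp
  | succ k ih =>
      have h1 : bsS a * (bsT a) ^ q = (bsT a) ^ (a * q) * bsS a := by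
        rw [← bs_conj_zpow]; group
      push_cast
      rw [zpow_add_one, mul_assoc, h1, ← mul_assoc, ih, pow_succ]
      rw [mul_assoc]
      ring_nf

lemma bs_shift' (a : ℤ) (k : ℕ) (q : ℤ) :
    (bsT a) ^ q * (bsS a) ^ (-(k : ℤ)) = (bsS a) ^ (-(k : ℤ)) * (bsT a) ^ (a ^ k * q) := by
  have h := bs_shift a k q
  have : (bsS a) ^ (-(k:ℤ)) * ((bsS a) ^ (k:ℤ) * (bsT a) ^ q) * (bsS a) ^ (-(k:ℤ))
      = (bsS a) ^ (-(k:ℤ)) * ((bsT a) ^ (a ^ k * q) * (bsS a) ^ (k:ℤ)) * (bsS a) ^ (-(k:ℤ)) := by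
    rw [h]
  calc (bsT a) ^ q * (bsS a) ^ (-(k : ℤ))
      = (bsS a) ^ (-(k:ℤ)) * ((bsS a) ^ (k:ℤ) * (bsT a) ^ q) * (bsS a) ^ (-(k:ℤ)) := by group
    _ = (bsS a) ^ (-(k:ℤ)) * ((bsT a) ^ (a ^ k * q) * (bsS a) ^ (k:ℤ)) * (bsS a) ^ (-(k:ℤ)) := this
    _ = (bsS a) ^ (-(k : ℤ)) * (bsT a) ^ (a ^ k * q) := by group

lemma bs_nf (a : ℤ) (w : PresentedGroup (bsRels a)) :
    ∃ (p r : ℕ) (q : ℤ),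
      w = (bsS a) ^ (-(p : ℤ)) * (bsT a) ^ q * (bsS a) ^ (r : ℤ) := by
  set s := bsS a
  set t := bsT a
  let S : Subgroup (PresentedGroup (bsRels a)) :=
    { carrier := {x | ∃ (p r : ℕ) (q : ℤ), x = s ^ (-(p : ℤ)) * t ^ q * s ^ (r : ℤ)}
      one_mem' := ⟨0, 0, 0, by simp⟩
      mul_mem' := by
        rintro x y ⟨p, r, q, rfl⟩ ⟨p', r', q', rfl⟩
        rcases le_or_gt (p' : ℕ) r with hle | hlt
        · obtain ⟨k, hk⟩ : ∃ k : ℕ, r = k + p' := ⟨r - p', by omega⟩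
          refine ⟨p, k + r', q + a ^ k * q', ?_⟩
          have hr2 : s ^ (r : ℤ) = s ^ (k : ℤ) * s ^ (p' : ℤ) := by
            rw [← zpow_add]; congr 1; push_cast [hk]; ring
          calc s ^ (-(p:ℤ)) * t ^ q * s ^ (r:ℤ) * (s ^ (-(p':ℤ)) * t ^ q' * s ^ (r':ℤ))
              = s ^ (-(p:ℤ)) * t ^ q * (s ^ (k:ℤ) * t ^ q') * s ^ (r':ℤ) := by
                rw [hr2]; group
            _ = s ^ (-(p:ℤ)) * t ^ q * (t ^ (a ^ k * q') * s ^ (k:ℤ)) * s ^ (r':ℤ) := by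
                rw [bs_shift]
            _ = s ^ (-(p:ℤ)) * t ^ (q + a ^ k * q') * s ^ (((k + r' : ℕ)):ℤ) := by
                push_cast; group
        · obtain ⟨k, hk⟩ : ∃ k : ℕ, p' = k + r := ⟨p' - r, by omega⟩
          refine ⟨p + k, r', a ^ k * q + q', ?_⟩
          have hr2 : s ^ (-(p' : ℤ)) = s ^ (-(k : ℤ)) * s ^ (-(r : ℤ)) := by
            rw [← zpow_add]; congr 1; push_cast [hk]; ring
          calc s ^ (-(p:ℤ)) * t ^ q * s ^ (r:ℤ) * (s ^ (-(p':ℤ)) * t ^ q' * s ^ (r':ℤ))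
              = s ^ (-(p:ℤ)) * (t ^ q * s ^ (-(k:ℤ))) * t ^ q' * s ^ (r':ℤ) := by
                rw [hr2]; group
            _ = s ^ (-(p:ℤ)) * (s ^ (-(k:ℤ)) * t ^ (a ^ k * q)) * t ^ q' * s ^ (r':ℤ) := by
                rw [bs_shift']
            _ = s ^ (-((p + k : ℕ):ℤ)) * t ^ (a ^ k * q + q') * s ^ ((r':ℕ):ℤ) := by
                push_cast; group
      inv_mem' := by
        rintro x ⟨p, r, q, rfl⟩
        exact ⟨r, p, -q, by group⟩ }
  have := PresentedGroup.generated_by (bsRels a) S (fun j => by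
    cases j
    · exact ⟨0, 0, 1, by simp [s, t, bsT]⟩
    · exact ⟨0, 1, 0, by simp [s, t, bsS]⟩) w
  exact this


end BS

/-- For an integer `a ≥ 2`, the subgroup of `Perm (ℤ × ℝ)` generated by
`σ(x,y) = (x+1, ay)` and `τ(x,y) = (x, y+1)` is isomorphic to the soluble
Baumslag–Solitar group `BS(1,a) = ⟨s, t | s t s⁻¹ = t^a⟩` via `s ↦ σ`, `t ↦ τ`, and its
action on `ℤ × ℝ` is free. -/
theorem baumslag_solitar_perm_iso_and_free (a : ℤ) (ha : 2 ≤ a)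
    (σ τ : Equiv.Perm (ℤ × ℝ))
    (hσ : ∀ p : ℤ × ℝ, σ p = (p.1 + 1, (a : ℝ) * p.2))
    (hτ : ∀ p : ℤ × ℝ, τ p = (p.1, p.2 + 1)) :
    (∃ e : PresentedGroup (bsRels a) ≃*
        (Subgroup.closure {σ, τ} : Subgroup (Equiv.Perm (ℤ × ℝ))),
      e (PresentedGroup.of true) = ⟨σ, Subgroup.subset_closure (by simp)⟩ ∧
      e (PresentedGroup.of false) = ⟨τ, Subgroup.subset_closure (by simp)⟩) ∧
    ∀ g ∈ Subgroup.closure ({σ, τ} : Set (Equiv.Perm (ℤ × ℝ))),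
      (∃ p : ℤ × ℝ, g p = p) → g = 1 := by
  have ha0 : (a : ℝ) ≠ 0 := by positivity
  set f : Bool → Equiv.Perm (ℤ × ℝ) := fun b => if b then σ else τ with hf
  have hperm_rel : σ * τ * σ⁻¹ = τ ^ a := by
    apply Equiv.ext; intro p
    have h1 : σ⁻¹ p = (p.1 - 1, (a : ℝ)⁻¹ * p.2) := by
      have h2 := sigma_zpow ha hσ (-1) p
      rw [show ((-1 : ℤ)) = -(1:ℤ) from rfl] at h2
      rw [← zpow_neg_one σ, h2, zpow_neg_one]
      rw [Prod.mk.injEq]; constructor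
      · ring
      · rfl
    rw [Equiv.Perm.mul_apply, Equiv.Perm.mul_apply, h1, hτ, hσ]
    rw [show (τ ^ a) = τ ^ (a : ℤ) from rfl, tau_zpow hτ]
    rw [Prod.mk.injEq]; constructor
    · simp
    · simp only []
      rw [mul_add, ← mul_assoc, mul_inv_cancel₀ ha0]
      ring
  have hrel : ∀ r ∈ bsRels a, FreeGroup.lift f r = 1 := by
    intro r hr
    simp only [bsRels, Set.mem_singleton_iff] at hr
    subst hr
    simp only [map_mul, map_inv, map_zpow, FreeGroup.lift_apply_of, hf, if_true, if_false]
    rw [mul_inv_eq_one]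
    exact hperm_rel
  set φ : PresentedGroup (bsRels a) →* Equiv.Perm (ℤ × ℝ) := PresentedGroup.toGroup hrel with hφ
  have hφs : φ (bsS a) = σ := by
    rw [hφ, bsS, PresentedGroup.toGroup.of]; simp [hf]
  have hφt : φ (bsT a) = τ := by
    rw [hφ, bsT, PresentedGroup.toGroup.of]; simp [hf]
  have hker : ∀ w : PresentedGroup (bsRels a), (∃ pt : ℤ × ℝ, φ w pt = pt) → w = 1 := by
    rintro w ⟨pt, hpt⟩
    obtain ⟨p, r, q, rfl⟩ := bs_nf a w
    rw [map_mul, map_mul, map_zpow, map_zpow, map_zpow, hφs, hφt] at hpt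
    rw [Equiv.Perm.mul_apply, Equiv.Perm.mul_apply, sigma_zpow ha hσ, tau_zpow hτ,
      sigma_zpow ha hσ, Prod.mk.injEq] at hpt
    obtain ⟨h1, h2⟩ := hpt
    simp only [] at h1 h2
    have hrp : (r : ℤ) = (p : ℤ) := by omega
    have hq : q = 0 := by
      rw [mul_add, ← mul_assoc, ← zpow_add₀ ha0, hrp, neg_add_cancel, zpow_zero, one_mul] at h2
      have h3 : (a : ℝ) ^ (-(p:ℤ)) * (q : ℝ) = 0 := by linarith
      rcases mul_eq_zero.1 h3 with h4 | h4
      · exact absurd h4 (zpow_ne_zero _ ha0)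
      · exact_mod_cast h4
    subst hq
    rw [zpow_zero, mul_one, ← zpow_add, hrp, neg_add_cancel, zpow_zero]
  have hinj : Function.Injective φ := by
    rw [injective_iff_map_eq_one]
    intro w hw
    exact hker w ⟨(0, 0), by rw [hw]; rfl⟩
  have hrange : φ.range = Subgroup.closure {σ, τ} := by
    rw [MonoidHom.range_eq_map, ← PresentedGroup.closure_range_of (bsRels a),
      MonoidHom.map_closure]
    congr 1
    ext g
    constructor
    · rintro ⟨y, ⟨b, rfl⟩, rfl⟩
      cases b
      · exact Or.inr (hφt.symm ▸ rfl)
      · exact Or.inl (hφs.symm ▸ rfl)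
    · rintro (rfl | rfl)
      · exact ⟨PresentedGroup.of true, ⟨true, rfl⟩, hφs⟩
      · exact ⟨PresentedGroup.of false, ⟨false, rfl⟩, hφt⟩
  refine ⟨⟨(MonoidHom.ofInjective hinj).trans (MulEquiv.subgroupCongr hrange), ?_, ?_⟩, ?_⟩
  · apply Subtype.ext
    exact hφs
  · apply Subtype.ext
    exact hφt
  · rintro g hg ⟨pt, hpt⟩
    rw [← hrange] at hg
    obtain ⟨w, rfl⟩ := hg
    rw [hker w ⟨pt, hpt⟩, map_one]
end
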